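/- arXiv:1808.03553 — 2 statements merged into one kernel-verified Lean document; each statement's English description precedes it below -/
import Mathlib

section
/- Let A, B be strings of lengths m and n, σ a character, and let K' be the all scores matrix of σA (σ prepended to A) and B. Then for all 0 ≤ i ≤ j ≤ n: K'[i,j] = K[i,j] + 1 if and only if k = nextmatch(i,σ,B) < ∞ and K[i,j] = K[k,j]. -/
variable {α : Type*}

/-- LCS of two lists: the maximum length of a common sublist. -/
noncomputable def LCS (X Y : List α) : ℕ :=
  sSup {k | ∃ Z : List α, Z.length = k ∧ Z.Sublist X ∧ Z.Sublist Y}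

/-- `substr S i j` is S[i..j]: the characters of S at (1-based) positions i+1,…,j. -/
def substr (S : List α) (i j : ℕ) : List α := (S.take j).drop i

/-- The density matrix D□ of a matrix D. -/
def density (D : ℕ → ℕ → ℤ) (i j : ℕ) : ℤ :=
  D i j + D (i - 1) (j - 1) - D (i - 1) j - D i (j - 1)

/-- The all scores matrix K of A and B: K[i,j] = LCS(B[i..j], A) if i ≤ j, else j - i. -/
noncomputable def Kmat (A B : List α) (i j : ℕ) : ℤ :=
  if i ≤ j then (LCS (substr B i j) A : ℤ) else (j : ℤ) - (i : ℤ)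

/-- The all scores matrix P of A and B: P[i,j] = LCS(B[i..n], A[0..j]). -/
noncomputable def Pmat (A B : List α) (i j : ℕ) : ℤ :=
  (LCS (substr B i B.length) (substr A 0 j) : ℤ)

/-- nextmatch(i,σ,B): minimum (1-based) position i' with i < i' ≤ |B| and B[i'] = σ; ⊤ (∞) if none. -/
noncomputable def nextmatch (i : ℕ) (σ : α) (B : List α) : ℕ∞ :=
  sInf {k : ℕ∞ | ∃ k' : ℕ, k = (k' : ℕ∞) ∧ i < k' ∧ k' ≤ B.length ∧ B[k' - 1]? = some σ}

/-- prevmatch(j,σ,B): maximum (1-based) position i' with 1 ≤ i' ≤ j and B[i'] = σ; ⊥ (−∞) if none. -/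
noncomputable def prevmatch (j : ℕ) (σ : α) (B : List α) : WithBot ℕ :=
  sSup {k : WithBot ℕ | ∃ k' : ℕ, k = (k' : WithBot ℕ) ∧ 1 ≤ k' ∧ k' ≤ j ∧ B[k' - 1]? = some σ}

private lemma lcs_bdd (X Y : List α) :
    BddAbove {k | ∃ Z : List α, Z.length = k ∧ Z.Sublist X ∧ Z.Sublist Y} :=
  ⟨X.length, fun _ ⟨_, hZ, hX, _⟩ => hZ ▸ hX.length_le⟩

private lemma le_LCS {X Y Z : List α} (hX : Z.Sublist X) (hY : Z.Sublist Y) :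
    Z.length ≤ LCS X Y := le_csSup (lcs_bdd X Y) ⟨Z, rfl, hX, hY⟩

private lemma LCS_spec (X Y : List α) :
    ∃ Z : List α, Z.length = LCS X Y ∧ Z.Sublist X ∧ Z.Sublist Y := by
  have h0 : (0:ℕ) ∈ {k | ∃ Z : List α, Z.length = k ∧ Z.Sublist X ∧ Z.Sublist Y} :=
    ⟨[], rfl, List.nil_sublist _, List.nil_sublist _⟩
  exact Nat.sSup_mem ⟨0, h0⟩ (lcs_bdd X Y)

private lemma LCS_mono {X X' : List α} (Y : List α) (h : X.Sublist X') :
    LCS X Y ≤ LCS X' Y := by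
  obtain ⟨Z, hlen, hX, hY⟩ := LCS_spec X Y
  calc LCS X Y = Z.length := hlen.symm
    _ ≤ _ := le_LCS (hX.trans h) hY

private lemma LCS_cons_le (X Y : List α) (a : α) : LCS X (a :: Y) ≤ LCS X Y + 1 := by
  obtain ⟨Z, hlen, hX, hY⟩ := LCS_spec X (a :: Y)
  rcases List.sublist_cons_iff.mp hY with h | ⟨r, rfl, h⟩
  · calc LCS X (a::Y) = Z.length := hlen.symm
      _ ≤ LCS X Y := le_LCS hX h
      _ ≤ _ := Nat.le_succ _
  · have hrX : r.Sublist X := (List.sublist_cons_self a r).trans hX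
    have := le_LCS hrX h
    simp only [List.length_cons] at hlen
    omega

private lemma sublist_drop_of_first {a : α} (X : List α) :
    ∀ (l : List α) (t : ℕ), (a :: l).Sublist X → X[t]? = some a →
      (∀ s, s < t → X[s]? ≠ some a) → l.Sublist (X.drop (t + 1)) := by
  induction X with
  | nil => intro l t h hget hmin; simp at hget
  | cons x X' ih =>
    intro l t h hget hmin
    cases t with
    | zero =>
      have hx : x = a := by simpa using hget
      rcases List.sublist_cons_iff.mp h with h' | ⟨r, hr, h'⟩
      · exact (List.sublist_cons_self a l).trans h'
      · injection hr with h1 h2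
        simpa [h2] using h'
    | succ t' =>
      have hxa : x ≠ a := by
        have := hmin 0 (Nat.succ_pos t')
        simpa using this
      rcases List.sublist_cons_iff.mp h with h' | ⟨r, hr, h'⟩
      · have hget' : X'[t']? = some a := by simpa using hget
        have hmin' : ∀ s, s < t' → X'[s]? ≠ some a := fun s hs => by
          have := hmin (s+1) (by omega)
          simpa using this
        simpa using ih l t' h' hget' hmin'
      · injection hr with h1 h2
        exact absurd h1.symm hxa

private lemma substr_append (B : List α) (i k j : ℕ) (hik : i ≤ k) (hkj : k ≤ j)
    (hj : j ≤ B.length) : substr B i k ++ substr B k j = substr B i j := by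
  unfold substr
  have h1 : B.take k = (B.take j).take k := by rw [List.take_take, min_eq_left hkj]
  rw [h1]
  conv_rhs => rw [← List.take_append_drop k (B.take j)]
  rw [List.drop_append_of_le_length (by simp [List.length_take]; omega)]

private lemma substr_drop (B : List α) (i k j : ℕ) (hik : i ≤ k) :
    substr B k j = (substr B i j).drop (k - i) := by
  unfold substr
  rw [List.drop_drop]
  congr 1
  omega

private lemma substr_getElem? (B : List α) (i j t : ℕ) (h : i + t < j) :
    (substr B i j)[t]? = B[i+t]? := by
  unfold substr
  rw [List.getElem?_drop, List.getElem?_take_of_lt h]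


/-- K'[i,j] = K[i,j] + 1 iff k = nextmatch(i,σ,B) < ∞ and K[i,j] = K[k,j]. -/
theorem stmt_5 {α : Type*} (A B : List α) (m n : ℕ)
    (hA : A.length = m) (hB : B.length = n) (σ : α) :
    ∀ i j : ℕ, i ≤ j → j ≤ n →
      (Kmat (σ :: A) B i j = Kmat A B i j + 1 ↔
        ∃ k : ℕ, nextmatch i σ B = (k : ℕ∞) ∧ Kmat A B i j = Kmat A B k j) := by
  subst hB
  intro i j hij hjn
  set Pset : Set ℕ := {k' | i < k' ∧ k' ≤ B.length ∧ B[k' - 1]? = some σ} with hPset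
  have hnmP : Pset.Nonempty → nextmatch i σ B = ((sInf Pset : ℕ) : ℕ∞) := by
    intro hne
    rw [nextmatch]
    apply le_antisymm
    · obtain ⟨h1, h2, h3⟩ := Nat.sInf_mem hne
      exact sInf_le ⟨sInf Pset, rfl, h1, h2, h3⟩
    · apply le_sInf
      rintro x ⟨k'', rfl, h1, h2, h3⟩
      have hmem : k'' ∈ Pset := ⟨h1, h2, h3⟩
      exact_mod_cast Nat.sInf_le hmem
  constructor
  · intro hK
    rw [Kmat, Kmat, if_pos hij, if_pos hij] at hK
    have h1 : LCS (substr B i j) (σ :: A) = LCS (substr B i j) A + 1 := by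
      exact_mod_cast hK
    obtain ⟨Z, hZlen, hZX, hZA⟩ := LCS_spec (substr B i j) (σ :: A)
    rcases List.sublist_cons_iff.mp hZA with hZ | ⟨Z', rfl, hZ'⟩
    · have := le_LCS hZX hZ; omega
    · have hZ'len : Z'.length = LCS (substr B i j) A := by
        simp only [List.length_cons] at hZlen; omega
      have hmem : σ ∈ substr B i j := hZX.subset List.mem_cons_self
      obtain ⟨t0, ht0⟩ := List.mem_iff_getElem?.mp hmem
      have ht0len : t0 < (substr B i j).length := (List.getElem?_eq_some_iff.mp ht0).1
      have hsublen : (substr B i j).length = j - i := by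
        simp [substr]; omega
      have ht0lt : i + t0 < j := by omega
      have hBt0 : B[i + t0]? = some σ := by
        rw [← substr_getElem? B i j t0 ht0lt]; exact ht0
      have hw : i + t0 + 1 ∈ Pset := ⟨by omega, by omega, by simpa using hBt0⟩
      have hne : Pset.Nonempty := ⟨_, hw⟩
      set k := sInf Pset with hk
      obtain ⟨hik, hkn, hkσ⟩ := Nat.sInf_mem hne
      have hkle : k ≤ i + t0 + 1 := Nat.sInf_le hw
      have hkj : k ≤ j := by omega
      have hle : LCS (substr B k j) A ≤ LCS (substr B i j) A := by
        rw [substr_drop B i k j (by omega)]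
        exact LCS_mono A (List.drop_sublist _ _)
      have hdrop : Z'.Sublist ((substr B i j).drop (k - 1 - i + 1)) := by
        apply sublist_drop_of_first _ _ _ hZX
        · rw [substr_getElem? B i j _ (by omega)]
          have he : i + (k - 1 - i) = k - 1 := by omega
          rw [he]; exact hkσ
        · intro s hs hcontra
          have hBs : B[i + s]? = some σ := by
            rw [← substr_getElem? B i j s (by omega)]; exact hcontra
          have hmem' : i + s + 1 ∈ Pset := ⟨by omega, by omega, by simpa using hBs⟩
          have := Nat.sInf_le hmem'
          omega
      have heq2 : k - 1 - i + 1 = k - i := by omega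
      rw [heq2, ← substr_drop B i k j (by omega)] at hdrop
      have hge : LCS (substr B i j) A ≤ LCS (substr B k j) A := by
        calc LCS (substr B i j) A = Z'.length := hZ'len.symm
          _ ≤ _ := le_LCS hdrop hZ'
      refine ⟨k, hnmP hne, ?_⟩
      rw [Kmat, Kmat, if_pos hij, if_pos hkj]
      exact_mod_cast le_antisymm hge hle
  · rintro ⟨k, hnm, hKeq⟩
    have hne : Pset.Nonempty := by
      by_contra hne
      rw [Set.not_nonempty_iff_eq_empty] at hne
      have hempty : {x : ℕ∞ | ∃ k' : ℕ, x = (k' : ℕ∞) ∧ i < k' ∧ k' ≤ B.length ∧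
          B[k' - 1]? = some σ} = ∅ := by
        ext x
        simp only [Set.mem_setOf_eq, Set.mem_empty_iff_false, iff_false, not_exists]
        rintro k' ⟨rfl, h1, h2, h3⟩
        have : k' ∈ Pset := ⟨h1, h2, h3⟩
        rw [hne] at this
        exact this
      rw [nextmatch, hempty, sInf_empty] at hnm
      exact absurd hnm.symm (by simp)
    rw [hnmP hne] at hnm
    have hkinf : sInf Pset = k := by exact_mod_cast hnm
    obtain ⟨hik, hkn, hkσ⟩ : k ∈ Pset := hkinf ▸ Nat.sInf_mem hne
    rw [Kmat, if_pos hij] at hKeq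
    have hkj : k ≤ j := by
      by_contra h
      rw [Kmat, if_neg (by omega)] at hKeq
      omega
    rw [Kmat, if_pos hkj] at hKeq
    have hnat : LCS (substr B i j) A = LCS (substr B k j) A := by exact_mod_cast hKeq
    obtain ⟨Z', hZ'len, hZ'B, hZ'A⟩ := LCS_spec (substr B k j) A
    have hcons : (σ :: Z').Sublist (substr B i j) := by
      rw [← substr_append B i k j (by omega) hkj hjn]
      have hσ : [σ].Sublist (substr B i k) := by
        rw [List.singleton_sublist]
        apply List.mem_iff_getElem?.mpr
        refine ⟨k - 1 - i, ?_⟩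
        rw [substr_getElem? B i k _ (by omega)]
        have he : i + (k - 1 - i) = k - 1 := by omega
        rw [he]; exact hkσ
      simpa using hσ.append hZ'B
    have hub := LCS_cons_le (substr B i j) A σ
    have hlb : LCS (substr B i j) A + 1 ≤ LCS (substr B i j) (σ :: A) := by
      have h2 := le_LCS hcons (hZ'A.cons₂ σ)
      simp only [List.length_cons] at h2
      omega
    rw [Kmat, Kmat, if_pos hij, if_pos hij]
    have : LCS (substr B i j) (σ :: A) = LCS (substr B i j) A + 1 := by omega
    exact_mod_cast this
end

section
/- Let A, B be strings of lengths m and n, σ a character occurring in B, and define Diff[i,j] = LCS(B[i..n], σ·A[0..j]) − P[i,j] for (i,j) ∈ [0:n]×[0:m]. Let i₀ be the minimum index i ∈ [0:n] with nextmatch(i,σ,B) = ∞ (equivalently, i₀ = prevmatch(n,σ,B), the position of the last occurrence of σ in B; since σ occurs in B, i₀ ≥ 1). Then Diff[i₀,0] − Diff[i₀−1,0] = −1, and Diff[i,0] − Diff[i−1,0] = 0 for every i ∈ [1:n] with i ≠ i₀. (These differences are the entries of column 0 of the density matrix of Diff when Diff is extended by the zero column Diff[·,−1] = 0.) -/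
variable {α : Type*}

lemma LCS_nil' (X : List α) : LCS X ([] : List α) = 0 := by
  have h : {k | ∃ Z : List α, Z.length = k ∧ Z.Sublist X ∧ Z.Sublist []} = {0} := by
    ext k
    simp only [List.sublist_nil, Set.mem_setOf_eq, Set.mem_singleton_iff]
    constructor
    · rintro ⟨Z, rfl, -, rfl⟩; rfl
    · rintro rfl; exact ⟨[], rfl, List.nil_sublist _, rfl⟩
  rw [LCS, h, csSup_singleton]

lemma LCS_single_mem {σ : α} {X : List α} (h : σ ∈ X) : LCS X [σ] = 1 := by
  have hs : {k | ∃ Z : List α, Z.length = k ∧ Z.Sublist X ∧ Z.Sublist [σ]} = {0, 1} := by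
    ext k
    simp only [Set.mem_setOf_eq, Set.mem_insert_iff, Set.mem_singleton_iff]
    constructor
    · rintro ⟨Z, rfl, hX, hσs⟩
      rcases List.sublist_singleton.mp hσs with rfl | rfl
      · left; rfl
      · right; rfl
    · rintro (rfl | rfl)
      · exact ⟨[], rfl, List.nil_sublist _, List.nil_sublist _⟩
      · exact ⟨[σ], rfl, List.singleton_sublist.mpr h, List.Sublist.refl _⟩
  rw [LCS, hs]
  have : ({0, 1} : Set ℕ) = {1, 0} := by ext; simp; tauto
  rw [this, csSup_pair]
  rfl

lemma LCS_single_not_mem {σ : α} {X : List α} (h : σ ∉ X) : LCS X [σ] = 0 := by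
  have hs : {k | ∃ Z : List α, Z.length = k ∧ Z.Sublist X ∧ Z.Sublist [σ]} = {0} := by
    ext k
    simp only [Set.mem_setOf_eq, Set.mem_singleton_iff]
    constructor
    · rintro ⟨Z, rfl, hX, hσs⟩
      rcases List.sublist_singleton.mp hσs with rfl | rfl
      · rfl
      · exact absurd (List.singleton_sublist.mp hX) h
    · rintro rfl; exact ⟨[], rfl, List.nil_sublist _, List.nil_sublist _⟩
  rw [LCS, hs, csSup_singleton]

lemma mem_drop_iff (B : List α) (σ : α) (i : ℕ) :
    σ ∈ B.drop i ↔ ∃ k' : ℕ, i < k' ∧ k' ≤ B.length ∧ B[k' - 1]? = some σ := by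
  constructor
  · intro h
    obtain ⟨j, hj⟩ := List.mem_iff_getElem?.mp h
    rw [List.getElem?_drop] at hj
    have hlen : i + j < B.length := (List.getElem?_eq_some_iff.mp hj).1
    exact ⟨i + j + 1, by omega, by omega, by simpa using hj⟩
  · rintro ⟨k', hik, hkn, hk⟩
    apply List.mem_iff_getElem?.mpr
    refine ⟨k' - 1 - i, ?_⟩
    rw [List.getElem?_drop]
    have : i + (k' - 1 - i) = k' - 1 := by omega
    rw [this]; exact hk

lemma nextmatch_eq_top_iff (i : ℕ) (σ : α) (B : List α) :
    nextmatch i σ B = ⊤ ↔ σ ∉ B.drop i := by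
  rw [nextmatch, sInf_eq_top, mem_drop_iff]
  constructor
  · rintro h ⟨k', h1, h2, h3⟩
    have := h (k' : ℕ∞) ⟨k', rfl, h1, h2, h3⟩
    exact absurd this (by simp)
  · rintro h a ⟨k', rfl, h1, h2, h3⟩
    exact absurd ⟨k', h1, h2, h3⟩ h

/-- column 0 of the density matrix of Diff: the entry at the
minimum row i₀ with nextmatch(i₀,σ,B) = ∞ equals −1, all other entries are 0. -/
theorem stmt_16 {α : Type*} (A B : List α) (m n : ℕ)
    (hA : A.length = m) (hB : B.length = n) (σ : α) (hσ : σ ∈ B)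
    (i₀ : ℕ) (hi₀n : i₀ ≤ n) (hi₀ : nextmatch i₀ σ B = ⊤)
    (hi₀min : ∀ i < i₀, nextmatch i σ B ≠ ⊤) :
    (((LCS (substr B i₀ n) (σ :: substr A 0 0) : ℤ) - Pmat A B i₀ 0) -
      ((LCS (substr B (i₀ - 1) n) (σ :: substr A 0 0) : ℤ) - Pmat A B (i₀ - 1) 0)
        = -1) ∧
    (∀ i, 1 ≤ i → i ≤ n → i ≠ i₀ →
      ((LCS (substr B i n) (σ :: substr A 0 0) : ℤ) - Pmat A B i 0) -
        ((LCS (substr B (i - 1) n) (σ :: substr A 0 0) : ℤ) - Pmat A B (i - 1) 0)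
          = 0) := by
  subst hB
  have hsub : ∀ i : ℕ, substr B i B.length = B.drop i := by
    intro i; simp [substr]
  have hsub0 : substr A 0 0 = ([] : List α) := by simp [substr]
  have hP : ∀ i : ℕ, Pmat A B i 0 = 0 := by
    intro i; simp [Pmat, hsub0, LCS_nil']
  have hi₀' : σ ∉ B.drop i₀ := (nextmatch_eq_top_iff _ _ _).mp hi₀
  have hi₀pos : 1 ≤ i₀ := by
    by_contra h
    have : i₀ = 0 := by omega
    subst this
    exact hi₀' (by simpa using hσ)
  have hmem : ∀ i < i₀, σ ∈ B.drop i := by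
    intro i hi
    by_contra h
    exact hi₀min i hi ((nextmatch_eq_top_iff _ _ _).mpr h)
  have hnot : ∀ i, i₀ ≤ i → σ ∉ B.drop i := by
    intro i hi h
    apply hi₀'
    have : B.drop i = (B.drop i₀).drop (i - i₀) := by
      rw [List.drop_drop]; congr 1; omega
    rw [this] at h
    exact List.drop_subset _ _ h
  constructor
  · rw [hsub0, hsub, hsub, hP, hP,
      LCS_single_not_mem hi₀', LCS_single_mem (hmem (i₀ - 1) (by omega))]
    ring
  · intro i h1 h2 hne
    rw [hsub0, hsub, hsub, hP, hP]
    rcases lt_or_gt_of_ne hne with h | h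
    · rw [LCS_single_mem (hmem i h), LCS_single_mem (hmem (i - 1) (by omega))]
      ring
    · rw [LCS_single_not_mem (hnot i (by omega)),
        LCS_single_not_mem (hnot (i - 1) (by omega))]
      ring
end
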